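/- For the boundary action of the free group 𝔽_r on (∂𝔽, ν): if g = t₁⋯t_n is in reduced form and k ≤ n is the largest number such that ξ_i⁻¹ = t_{n+1−i} for all i ≤ k, then the Radon–Nikodym derivative satisfies (d(ν∘g)/dν)(ξ) = (2r−1)^{2k−n}. In particular, setting λ = (2r−1)⁻¹, the cocycle R_λ(g,ξ) = 2k−n is integer valued. -/

import Mathlib

open MeasureTheory

/-- The symmetric generating set of the free group 𝔽_r, modelled as `Fin r × Bool`. -/
abbrev FGen (r : ℕ) := Fin r × Bool

/-- Formal inverse of a generator: `(i,b)⁻¹ = (i,!b)`. -/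
def invGen {r : ℕ} (s : FGen r) : FGen r := (s.1, !s.2)

/-- The boundary ∂𝔽 of the free group: infinite reduced words in the generators. -/
def FBoundary (r : ℕ) := {ξ : ℕ → FGen r // ∀ i, ξ (i + 1) ≠ invGen (ξ i)}

instance (r : ℕ) : MeasurableSpace (FBoundary r) :=
  Subtype.instMeasurableSpace

/-- The cylinder of boundary points starting with the first `m` letters of `w`. -/
def fcyl {r : ℕ} (m : ℕ) (w : ℕ → FGen r) : Set (FBoundary r) :=
  {ξ | ∀ i, i < m → ξ.1 i = w i}

/-- `w` is a reduced word on the first `n` letters. -/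
def FReduced {r : ℕ} (n : ℕ) (w : ℕ → FGen r) : Prop :=
  ∀ i, i + 1 < n → w (i + 1) ≠ invGen (w i)

namespace FBAux
variable {r : ℕ}

lemma invGen_invGen (s : FGen r) : invGen (invGen s) = s := by
  simp [invGen]

lemma invGen_ne_iff {a b : FGen r} : a ≠ invGen b ↔ b ≠ invGen a := by
  constructor <;> { intro h he; exact h (by rw [he, invGen_invGen]) }

lemma measurableSet_fcyl (m : ℕ) (v : ℕ → FGen r) : MeasurableSet (fcyl m v) := by
  have he : fcyl m v = ⋂ i ∈ Finset.range m, {ξ : FBoundary r | ξ.1 i = v i} := by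
    ext ξ; simp [fcyl]
  rw [he]
  refine MeasurableSet.biInter (Set.to_countable _) fun i _ => ?_
  have h1 : Measurable fun ξ : FBoundary r => ξ.1 i :=
    (measurable_pi_apply i).comp measurable_subtype_coe
  exact h1 (measurableSet_singleton (v i))

def cylSets (r : ℕ) : Set (Set (FBoundary r)) := {S | ∃ m v, S = fcyl m v}

lemma isPiSystem_cylSets : IsPiSystem (cylSets r) := by
  rintro _ ⟨m, v, rfl⟩ _ ⟨m', v', rfl⟩ ⟨ξ, hξ, hξ'⟩
  rcases le_total m m' with h | h
  · refine ⟨m', v', ?_⟩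
    ext η
    constructor
    · rintro ⟨_, h2⟩; exact h2
    · intro h2
      refine ⟨fun i hi => ?_, h2⟩
      rw [h2 i (lt_of_lt_of_le hi h), ← hξ' i (lt_of_lt_of_le hi h), hξ i hi]
  · refine ⟨m, v, ?_⟩
    ext η
    constructor
    · rintro ⟨h1, _⟩; exact h1
    · intro h1
      refine ⟨h1, fun i hi => ?_⟩
      rw [h1 i (lt_of_lt_of_le hi h), ← hξ i (lt_of_lt_of_le hi h), hξ' i hi]

lemma generateFrom_cylSets :
    (inferInstance : MeasurableSpace (FBoundary r)) =
      MeasurableSpace.generateFrom (cylSets r) := by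
  apply le_antisymm
  · have hletter : ∀ (i : ℕ) (a : FGen r),
        MeasurableSet[MeasurableSpace.generateFrom (cylSets r)] {ξ : FBoundary r | ξ.1 i = a} := by
      intro i a
      have he : {ξ : FBoundary r | ξ.1 i = a} =
          ⋃ (v : Fin (i+1) → FGen r) (_ : v ⟨i, Nat.lt_succ_self i⟩ = a),
            fcyl (i+1) (fun j => if h : j < i+1 then v ⟨j, h⟩ else a) := by
        ext ξ
        simp only [Set.mem_setOf_eq, Set.mem_iUnion]
        constructor
        · intro h
          refine ⟨fun j => ξ.1 j, h, fun j hj => ?_⟩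
          simp [fcyl, hj]
        · rintro ⟨v, hva, hξ⟩
          have h2 := hξ i (Nat.lt_succ_self i)
          simpa [hva] using h2
      rw [he]
      exact .iUnion fun v => .iUnion fun hv =>
        MeasurableSpace.measurableSet_generateFrom ⟨_, _, rfl⟩
    have hpi : (MeasurableSpace.pi : MeasurableSpace (ℕ → FGen r)) =
        ⨆ i : ℕ, MeasurableSpace.comap (fun b : ℕ → FGen r => b i) inferInstance := rfl
    show MeasurableSpace.comap (Subtype.val) MeasurableSpace.pi ≤ _
    refine MeasurableSpace.comap_le_iff_le_map.mpr ?_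
    rw [hpi]
    refine iSup_le fun i => ?_
    rw [MeasurableSpace.comap_le_iff_le_map]
    intro s _
    show MeasurableSet[MeasurableSpace.generateFrom (cylSets r)]
      (Subtype.val ⁻¹' ((fun b : ℕ → FGen r => b i) ⁻¹' s))
    have he2 : (Subtype.val ⁻¹' ((fun b : ℕ → FGen r => b i) ⁻¹' s) : Set (FBoundary r)) =
        ⋃ a ∈ s, {ξ : FBoundary r | ξ.1 i = a} := by
      ext ξ; simp; rfl
    rw [he2]
    exact .biUnion s.to_countable fun a _ => hletter i a
  · exact MeasurableSpace.generateFrom_le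
      (by rintro _ ⟨m, v, rfl⟩; exact measurableSet_fcyl m v)

lemma reduced_of_nonempty {m : ℕ} {v : ℕ → FGen r} (h : (fcyl m v).Nonempty) :
    FReduced m v := by
  obtain ⟨ξ, hξ⟩ := h
  intro i hi
  rw [← hξ (i+1) hi, ← hξ i (by omega)]
  exact ξ.2 i

end FBAux

/-- Radon–Nikodym derivative of the boundary action of the free group:
if `g = t₁⋯t_n` is reduced and `k ≤ n` is the largest number such that
`ξᵢ⁻¹ = t_{n+1−i}` for all `i ≤ k` (the amount of cancellation of `g` against `ξ`),
then `(d(ν∘g)/dν)(ξ) = (2r−1)^{2k−n}`; in particular, with `λ = (2r−1)⁻¹`, the cocycle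
`R_λ(g,ξ) = 2k−n` is integer valued.  Here ν is the measure giving each length-m
cylinder of reduced words mass `(2r)⁻¹(2r−1)^{−m+1}`, `g : FBoundary r → FBoundary r`
is the boundary action of the word `w` (with two-sided inverse `ginv`), and
`ν∘g = ν ∘ (image of g) = (ginv)_*ν`. -/
theorem free_boundary_rnDeriv (r : ℕ) (hr : 2 ≤ r)
    (ν : Measure (FBoundary r)) [IsProbabilityMeasure ν]
    (hν : ∀ m : ℕ, 1 ≤ m → ∀ w : ℕ → FGen r, FReduced m w →
      ν (fcyl m w) = ENNReal.ofReal (((2 * r : ℝ))⁻¹ * ((2 * r - 1 : ℝ)) ^ (1 - (m : ℤ))))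
    (n k : ℕ) (hkn : k ≤ n) (w : ℕ → FGen r) (hw : FReduced n w)
    (g ginv : FBoundary r → FBoundary r)
    (hgmeas : Measurable g) (hginvmeas : Measurable ginv)
    (hinv₁ : Function.LeftInverse ginv g) (hinv₂ : Function.RightInverse ginv g)
    (hgact : ∀ ξ : FBoundary r,
      (∀ i, i < k → invGen (ξ.1 i) = w (n - 1 - i)) →
      (k < n → ξ.1 k ≠ invGen (w (n - 1 - k))) →
      ∀ i, (g ξ).1 i = if i < n - k then w i else ξ.1 (i - (n - k) + k)) :
    ∀ᵐ ξ ∂ν,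
      ((∀ i, i < k → invGen (ξ.1 i) = w (n - 1 - i)) ∧
        (k < n → ξ.1 k ≠ invGen (w (n - 1 - k)))) →
      (((ν.map ginv).rnDeriv ν) ξ).toReal = (2 * r - 1 : ℝ) ^ (2 * (k : ℤ) - n) := by
  classical
  set u : ℕ → FGen r := fun j => invGen (w (n - 1 - min j k)) with hu_def
  have hu : ∀ j, j < k → u j = invGen (w (n - 1 - j)) := by
    intro j hj; simp [hu_def, min_eq_left hj.le]
  have huk : u k = invGen (w (n - 1 - k)) := by simp [hu_def]
  have hpos : (0:ℝ) < 2 * (r:ℝ) - 1 := by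
    have h2 : (2:ℝ) ≤ (r:ℝ) := by exact_mod_cast hr
    linarith
  set c : ENNReal := ENNReal.ofReal ((2 * (r:ℝ) - 1) ^ (2 * (k:ℤ) - (n:ℤ))) with hc_def
  set Sfin : Finset (FGen r) := Finset.univ.filter (fun a => k < n → a ≠ u k) with hS_def
  set A : Set (FBoundary r) := ⋃ a ∈ Sfin, fcyl (k+1) (Function.update u k a) with hA_def
  have hAmeas : MeasurableSet A := by
    rw [hA_def]
    exact MeasurableSet.biUnion Sfin.countable_toSet
      (fun a _ => FBAux.measurableSet_fcyl _ _)
  have hAmem : ∀ ξ : FBoundary r,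
      ξ ∈ A ↔ ((∀ i, i < k → invGen (ξ.1 i) = w (n - 1 - i)) ∧
        (k < n → ξ.1 k ≠ invGen (w (n - 1 - k)))) := by
    intro ξ
    rw [hA_def]
    simp only [Set.mem_iUnion]
    constructor
    · rintro ⟨a, ha, hx⟩
      have ha' := (Finset.mem_filter.mp ha).2
      constructor
      · intro i hi
        have h3 := hx i (by omega)
        rw [Function.update_of_ne (show i ≠ k by omega) a u] at h3
        rw [h3, hu i hi, FBAux.invGen_invGen]
      · intro hkn'
        have h3 := hx k (by omega)
        rw [Function.update_self] at h3
        rw [h3, ← huk]; exact ha' hkn'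
    · rintro ⟨h1, h2⟩
      refine ⟨ξ.1 k, ?_, ?_⟩
      · refine Finset.mem_filter.mpr ⟨Finset.mem_univ _, fun hkn' => ?_⟩
        rw [huk]; exact h2 hkn'
      · intro i hi
        rcases Nat.lt_or_ge i k with hik | hik
        · rw [Function.update_of_ne (show i ≠ k by omega)]
          rw [hu i hik, ← h1 i hik, FBAux.invGen_invGen]
        · have hik' : i = k := by omega
          subst hik'; rw [Function.update_self]
  -- key cylinder computation
  have key : ∀ (m : ℕ) (v : ℕ → FGen r), k + 1 ≤ m → (∀ i, i < k → v i = u i) →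
      (k < n → v k ≠ u k) → (ν.map ginv) (fcyl m v) = c * ν (fcyl m v) := by
    intro m v hm h1 h2
    rcases (fcyl m v).eq_empty_or_nonempty with he | hne
    · rw [he]; simp
    obtain ⟨ξ₀, hξ₀⟩ := hne
    set M : ℕ := (m - k) + (n - k) with hM_def
    set v'' : ℕ → FGen r := fun i => if i < n - k then w i else v (i - (n - k) + k)
      with hv''_def
    have hcond : ∀ ξ : FBoundary r, ξ ∈ fcyl m v →
        ((∀ i, i < k → invGen (ξ.1 i) = w (n - 1 - i)) ∧
         (k < n → ξ.1 k ≠ invGen (w (n - 1 - k)))) := by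
      intro ξ hξ
      constructor
      · intro i hi
        rw [hξ i (by omega), h1 i hi, hu i hi, FBAux.invGen_invGen]
      · intro hkn'
        rw [hξ k (by omega), ← huk]; exact h2 hkn'
    have hvk : 0 < k → v k ≠ w (n - k) := by
      intro hk0 he'
      have hred := ξ₀.2 (k-1)
      rw [show k - 1 + 1 = k by omega] at hred
      apply hred
      rw [hξ₀ k (by omega), hξ₀ (k-1) (by omega), h1 (k-1) (by omega), hu (k-1) (by omega),
        FBAux.invGen_invGen, he', show n - 1 - (k-1) = n - k from by omega]
    have hpre : ginv ⁻¹' (fcyl m v) = fcyl M v'' := by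
      ext η
      simp only [Set.mem_preimage]
      constructor
      · intro hη
        have hg := hgact (ginv η) (hcond _ hη).1 (hcond _ hη).2
        intro i hi
        have h4 : η.1 i = (g (ginv η)).1 i := by rw [hinv₂ η]
        rw [h4, hg i]
        by_cases hik : i < n - k
        · simp [hv''_def, hik]
        · rw [if_neg hik]
          have hlt : i - (n - k) + k < m := by omega
          rw [hη _ hlt]
          simp only [hv''_def, if_neg hik]
      · intro hη
        set x : ℕ → FGen r := fun j => if h : j < k then u j else η.1 (j - k + (n - k))
          with hx_def
        have hxk : ∀ j, k ≤ j → x j = η.1 (j - k + (n - k)) := by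
          intro j hj; rw [hx_def]; simp only [dif_neg (show ¬ j < k by omega)]
        have hxlt : ∀ j, j < k → x j = u j := by
          intro j hj; rw [hx_def]; simp only [dif_pos hj]
        have hηnk : η.1 (n - k) = v k := by
          rw [hη (n - k) (by omega), hv''_def]
          simp only [if_neg (lt_irrefl (n - k))]
          rw [show n - k - (n - k) + k = k from by omega]
        have hxkk : x k = v k := by
          rw [hxk k le_rfl, show k - k + (n - k) = n - k from by omega, hηnk]
        have hxred : ∀ j, x (j+1) ≠ invGen (x j) := by
          intro j
          rcases Nat.lt_or_ge (j+1) k with hj | hj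
          · rw [hxlt (j+1) hj, hxlt j (by omega), hu (j+1) hj, hu j (by omega),
              FBAux.invGen_invGen, show n - 1 - (j+1) = n - 2 - j from by omega]
            intro hcontra
            exact hw (n - 2 - j) (by omega)
              (by rw [show n - 2 - j + 1 = n - 1 - j from by omega, ← hcontra])
          · rcases Nat.eq_or_lt_of_le hj with hj' | hj'
            · rw [hxk (j+1) (by omega), show j + 1 - k + (n - k) = n - k from by omega, hηnk,
                hxlt j (by omega), hu j (by omega), FBAux.invGen_invGen,
                show n - 1 - j = n - k from by omega]
              exact hvk (by omega)
            · rw [hxk (j+1) (by omega), hxk j (by omega)]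
              have hr2 := η.2 (j - k + (n - k))
              rw [show j - k + (n - k) + 1 = j + 1 - k + (n - k) from by omega] at hr2
              exact hr2
        set ξ : FBoundary r := ⟨x, hxred⟩ with hξ_def
        have hc1 : ∀ i, i < k → invGen (ξ.1 i) = w (n - 1 - i) := by
          intro i hi
          show invGen (x i) = _
          rw [hxlt i hi, hu i hi, FBAux.invGen_invGen]
        have hc2 : k < n → ξ.1 k ≠ invGen (w (n - 1 - k)) := by
          intro hkn'
          show x k ≠ _
          rw [hxkk, ← huk]
          exact h2 hkn'
        have hgξ : g ξ = η := by
          have hg := hgact ξ hc1 hc2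
          apply Subtype.ext
          funext i
          rw [hg i]
          by_cases hik : i < n - k
          · rw [if_pos hik, hη i (by omega), hv''_def]
            simp only [if_pos hik]
          · rw [if_neg hik]
            show x (i - (n - k) + k) = η.1 i
            rw [hxk _ (by omega), show i - (n - k) + k - k + (n - k) = i from by omega]
        have hginvη : ginv η = ξ := by rw [← hgξ, hinv₁ ξ]
        rw [hginvη]
        intro i hi
        show x i = v i
        rcases Nat.lt_or_ge i k with hik | hik
        · rw [hxlt i hik, ← h1 i hik]
        · rw [hxk i hik, hη (i - k + (n - k)) (by omega), hv''_def]
          simp only [if_neg (show ¬ (i - k + (n - k) < n - k) by omega)]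
          rw [show i - k + (n - k) - (n - k) + k = i from by omega]
    have h1m : 1 ≤ m := by omega
    have h1M : 1 ≤ M := by omega
    have hredv : FReduced m v := FBAux.reduced_of_nonempty ⟨ξ₀, hξ₀⟩
    have hMne : (fcyl M v'').Nonempty := by
      refine ⟨g ξ₀, ?_⟩
      rw [← hpre]
      show ginv (g ξ₀) ∈ fcyl m v
      rw [hinv₁ ξ₀]
      exact hξ₀
    have hredv'' : FReduced M v'' := FBAux.reduced_of_nonempty hMne
    rw [Measure.map_apply hginvmeas (FBAux.measurableSet_fcyl m v), hpre,
      hν M h1M v'' hredv'', hν m h1m v hredv, hc_def,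
      ← ENNReal.ofReal_mul (zpow_nonneg (le_of_lt hpos) _)]
    congr 1
    rw [show (1:ℤ) - (M:ℤ) = (2 * (k:ℤ) - (n:ℤ)) + (1 - (m:ℤ)) from by omega,
      zpow_add₀ (ne_of_gt hpos)]
    ring
  -- measure of A
  have hdisj : (Sfin : Set (FGen r)).PairwiseDisjoint
      (fun a => fcyl (k+1) (Function.update u k a)) := by
    intro a _ b _ hab
    refine Set.disjoint_left.mpr fun ξ hξ1 hξ2 => hab ?_
    have e1 := hξ1 k (by omega)
    have e2 := hξ2 k (by omega)
    rw [Function.update_self] at e1 e2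
    rw [← e1, e2]
  have hA_eq : (ν.map ginv) A = c * ν A := by
    rw [hA_def,
      measure_biUnion_finset hdisj (fun a _ => FBAux.measurableSet_fcyl _ _),
      measure_biUnion_finset hdisj (fun a _ => FBAux.measurableSet_fcyl _ _),
      Finset.mul_sum]
    refine Finset.sum_congr rfl fun a ha => ?_
    refine key (k+1) _ le_rfl
      (fun i hi => Function.update_of_ne (show i ≠ k by omega) _ _) (fun hkn' => ?_)
    rw [Function.update_self]
    exact (Finset.mem_filter.mp ha).2 hkn'
  -- equality of restricted measures
  haveI hPmap : IsProbabilityMeasure (ν.map ginv) :=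
    Measure.isProbabilityMeasure_map hginvmeas.aemeasurable
  haveI hFsmul : IsFiniteMeasure (c • ν) := by
    constructor
    rw [Measure.smul_apply, smul_eq_mul, measure_univ, mul_one, hc_def]
    exact ENNReal.ofReal_lt_top
  have hres : (ν.map ginv).restrict A = (c • ν).restrict A := by
    refine ext_of_generate_finite (FBAux.cylSets r) FBAux.generateFrom_cylSets
      FBAux.isPiSystem_cylSets ?_ ?_
    · rintro _ ⟨m, v, rfl⟩
      rw [Measure.restrict_apply (FBAux.measurableSet_fcyl m v),
        Measure.restrict_apply (FBAux.measurableSet_fcyl m v),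
        Measure.smul_apply, smul_eq_mul]
      by_cases hmk : k + 1 ≤ m
      · rcases (fcyl m v ∩ A).eq_empty_or_nonempty with he | ⟨ξ₀, hξ₀C, hξ₀A⟩
        · rw [he]; simp
        · obtain ⟨hc1, hc2⟩ := (hAmem ξ₀).mp hξ₀A
          have hsub : fcyl m v ⊆ A := by
            intro ξ hξ
            rw [hAmem]
            constructor
            · intro i hi
              rw [hξ i (by omega), ← hξ₀C i (by omega)]
              exact hc1 i hi
            · intro h'
              rw [hξ k (by omega), ← hξ₀C k (by omega)]
              exact hc2 h'
          rw [Set.inter_eq_left.mpr hsub]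
          refine key m v hmk (fun i hi => ?_) (fun h' => ?_)
          · rw [← hξ₀C i (by omega), ← FBAux.invGen_invGen (ξ₀.1 i), hc1 i hi, hu i hi]
          · rw [← hξ₀C k (by omega), huk]
            exact hc2 h'
      · rcases (fcyl m v ∩ A).eq_empty_or_nonempty with he | ⟨ξ₀, hξ₀C, hξ₀A⟩
        · rw [he]; simp
        · have hsub : A ⊆ fcyl m v := by
            intro ξ hξ
            obtain ⟨hd1, _⟩ := (hAmem ξ).mp hξ
            obtain ⟨hc1, _⟩ := (hAmem ξ₀).mp hξ₀A
            intro i hi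
            rw [← hξ₀C i hi, ← FBAux.invGen_invGen (ξ.1 i), hd1 i (by omega),
              ← hc1 i (by omega), FBAux.invGen_invGen]
          rw [Set.inter_eq_right.mpr hsub]
          exact hA_eq
    · rw [Measure.restrict_apply_univ, Measure.restrict_apply_univ,
        Measure.smul_apply, smul_eq_mul]
      exact hA_eq
  -- Radon-Nikodym derivative
  obtain ⟨T, hTm, hT1, hT2⟩ := Measure.mutuallySingular_singularPart (ν.map ginv) ν
  have hfc : (ν.map ginv).rnDeriv ν =ᵐ[ν.restrict A] (fun _ => c) := by
    refine ae_eq_of_forall_setLIntegral_eq_of_sigmaFinite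
      (Measure.measurable_rnDeriv _ _) measurable_const ?_
    intro s hs _
    have hsA : MeasurableSet (s ∩ A) := hs.inter hAmeas
    have hae : ((s ∩ A : Set (FBoundary r))) =ᵐ[ν] ((s ∩ A) ∩ T : Set (FBoundary r)) := by
      refine MeasureTheory.ae_eq_set.mpr ⟨?_, ?_⟩
      · exact measure_mono_null (fun x hx => hx.2 ∘ (fun h => ⟨hx.1, h⟩)) hT2
      · have he0 : (((s ∩ A) ∩ T) \ (s ∩ A) : Set (FBoundary r)) = ∅ := by
          ext x
          simp only [Set.mem_diff, Set.mem_inter_iff, Set.mem_empty_iff_false, iff_false]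
          tauto
        rw [he0]
        exact measure_empty
    calc ∫⁻ x in s, (ν.map ginv).rnDeriv ν x ∂(ν.restrict A)
        = ∫⁻ x in s ∩ A, (ν.map ginv).rnDeriv ν x ∂ν := by
          rw [Measure.restrict_restrict hs]
      _ = ∫⁻ x in (s ∩ A) ∩ T, (ν.map ginv).rnDeriv ν x ∂ν := setLIntegral_congr hae
      _ = ν.withDensity ((ν.map ginv).rnDeriv ν) ((s ∩ A) ∩ T) :=
          (withDensity_apply _ (hsA.inter hTm)).symm
      _ = (ν.map ginv) ((s ∩ A) ∩ T) := by
          conv_rhs => rw [(ν.map ginv).haveLebesgueDecomposition_add ν]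
          rw [Measure.add_apply,
            measure_mono_null Set.inter_subset_right hT1, zero_add]
      _ = c * ν ((s ∩ A) ∩ T) := by
          have h5 : ((s ∩ A) ∩ T : Set (FBoundary r)) = (s ∩ T) ∩ A := by
            ext x
            simp only [Set.mem_inter_iff]
            tauto
          rw [h5, ← Measure.restrict_apply (hs.inter hTm), hres,
            Measure.restrict_apply (hs.inter hTm), Measure.smul_apply, smul_eq_mul]
      _ = c * ν (s ∩ A) := by rw [measure_congr hae.symm]
      _ = ∫⁻ _x in s, c ∂(ν.restrict A) := by
          rw [setLIntegral_const, Measure.restrict_apply hs]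
  have hfin := (ae_restrict_iff' hAmeas).mp hfc
  filter_upwards [hfin] with ξ hξ hcondξ
  have hmem : ξ ∈ A := (hAmem ξ).mpr hcondξ
  rw [hξ hmem, hc_def, ENNReal.toReal_ofReal (zpow_nonneg (le_of_lt hpos) _)]
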